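/- Let n > d ≥ 1 and let A be a subset of {1,…,n+1} such that any two distinct elements of A differ by at least d. Then P(n+1, d) ≥ Σ_{i ∈ A} P_d({1,…,n+1} \ {i}). -/

import Mathlib

/-- The Chebyshev distance between two functions `{1,…,m} → ℤ≥0`
(represented on `Fin m`): `max_i |σ(i) − τ(i)|`. -/
def cheb {m : ℕ} (σ τ : Fin m → ℕ) : ℕ :=
  Finset.univ.sup fun i => Nat.dist (σ i) (τ i)

/-- `Pd d S` is the maximum cardinality of a set of bijections from
`{1,…,|S|}` onto the finite set `S` of integers (represented as injections
`Fin S.card → ℕ` with values in `S`) whose pairwise Chebyshev distance is at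
least `d`. -/
noncomputable def Pd (d : ℕ) (S : Finset ℕ) : ℕ :=
  sSup {k | ∃ A : Finset (Fin S.card → ℕ),
    (∀ σ ∈ A, Function.Injective σ ∧ ∀ i, σ i ∈ S) ∧
    (∀ σ ∈ A, ∀ τ ∈ A, σ ≠ τ → d ≤ cheb σ τ) ∧ A.card = k}

/-- `P n d` is the maximum cardinality of a set of permutations of `{1,…,n}`
whose pairwise Chebyshev distance is at least `d`. -/
noncomputable def P (n d : ℕ) : ℕ := Pd d (Finset.Icc 1 n)

lemma pd_bddAbove (d : ℕ) (S : Finset ℕ) :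
    BddAbove {k | ∃ A : Finset (Fin S.card → ℕ),
      (∀ σ ∈ A, Function.Injective σ ∧ ∀ i, σ i ∈ S) ∧
      (∀ σ ∈ A, ∀ τ ∈ A, σ ≠ τ → d ≤ cheb σ τ) ∧ A.card = k} := by
  refine ⟨(Fintype.piFinset fun _ : Fin S.card => S).card, ?_⟩
  rintro k ⟨B, h1, _, rfl⟩
  exact Finset.card_le_card fun σ hσ => by
    simpa [Fintype.mem_piFinset] using (h1 σ hσ).2

lemma pd_exists (d : ℕ) (S : Finset ℕ) : ∃ B : Finset (Fin S.card → ℕ),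
    (∀ σ ∈ B, Function.Injective σ ∧ ∀ i, σ i ∈ S) ∧
    (∀ σ ∈ B, ∀ τ ∈ B, σ ≠ τ → d ≤ cheb σ τ) ∧ B.card = Pd d S := by
  have hne : Set.Nonempty {k | ∃ A : Finset (Fin S.card → ℕ),
      (∀ σ ∈ A, Function.Injective σ ∧ ∀ i, σ i ∈ S) ∧
      (∀ σ ∈ A, ∀ τ ∈ A, σ ≠ τ → d ≤ cheb σ τ) ∧ A.card = k} :=
    ⟨0, ∅, by simp, by simp, rfl⟩
  exact Nat.sSup_mem hne (pd_bddAbove d S)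

lemma sum_le_Pd (d : ℕ) (S : Finset ℕ) (A : Finset ℕ) (hA : A ⊆ S)
    (hdist : ∀ i ∈ A, ∀ j ∈ A, i ≠ j → d ≤ Nat.dist i j) :
    ∑ i ∈ A, Pd d (S.erase i) ≤ Pd d S := by
  rcases A.eq_empty_or_nonempty with rfl | ⟨i0, hi0⟩
  · simp
  have hSne : S.Nonempty := ⟨i0, hA hi0⟩
  have hScard : 1 ≤ S.card := Finset.card_pos.mpr hSne
  choose B hB1 hB2 hB3 using fun i => pd_exists d (S.erase i)
  set ext : ∀ i : ℕ, (Fin (S.erase i).card → ℕ) → (Fin S.card → ℕ) :=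
    fun i σ k => if h : (k : ℕ) < (S.erase i).card then σ ⟨k, h⟩ else i with hext
  have hm : ∀ i ∈ A, (S.erase i).card = S.card - 1 :=
    fun i hi => Finset.card_erase_of_mem (hA hi)
  have hmlt : ∀ i ∈ A, (S.erase i).card < S.card :=
    fun i hi => Finset.card_erase_lt_of_mem (hA hi)
  set L : Fin S.card := ⟨S.card - 1, Nat.sub_lt hScard one_pos⟩ with hL
  have hlast : ∀ i ∈ A, ∀ σ, ext i σ L = i := by
    intro i hi σ
    simp only [hext]
    rw [dif_neg]
    rw [hm i hi]
    exact lt_irrefl _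
  have hpos : ∀ i (σ : Fin (S.erase i).card → ℕ) (j : Fin (S.erase i).card)
      (h : (j : ℕ) < S.card), ext i σ ⟨j, h⟩ = σ j := by
    intro i σ j h
    simp only [hext, dif_pos j.isLt, Fin.eta]
  have hextinj : ∀ i, Function.Injective (ext i) := by
    intro i σ τ h
    funext j
    have hj : (j : ℕ) < S.card := lt_of_lt_of_le j.isLt
      (Finset.card_le_card (Finset.erase_subset i S))
    have := congrFun h ⟨j, hj⟩
    rwa [hpos, hpos] at this
  set U : Finset (Fin S.card → ℕ) := A.biUnion fun i => (B i).image (ext i) with hU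
  have hmemU : ∀ f ∈ U, ∃ i ∈ A, ∃ σ ∈ B i, f = ext i σ := by
    intro f hf
    simp only [hU, Finset.mem_biUnion, Finset.mem_image] at hf
    obtain ⟨i, hi, σ, hσ, rfl⟩ := hf
    exact ⟨i, hi, σ, hσ, rfl⟩
  have hU1 : ∀ f ∈ U, Function.Injective f ∧ ∀ k, f k ∈ S := by
    intro f hf
    obtain ⟨i, hi, σ, hσ, rfl⟩ := hmemU f hf
    obtain ⟨hσinj, hσmem⟩ := hB1 i σ hσ
    constructor
    · intro k1 k2 hk
      simp only [hext] at hk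
      by_cases h1 : (k1 : ℕ) < (S.erase i).card <;>
        by_cases h2 : (k2 : ℕ) < (S.erase i).card
      · rw [dif_pos h1, dif_pos h2] at hk
        have h3 : (⟨(k1 : ℕ), h1⟩ : Fin (S.erase i).card) = ⟨(k2 : ℕ), h2⟩ :=
          hσinj hk
        have h4 : (k1 : ℕ) = (k2 : ℕ) := by simpa [Fin.mk.injEq] using h3
        exact Fin.ext h4
      · rw [dif_pos h1, dif_neg h2] at hk
        have hmem1 : σ ⟨(k1 : ℕ), h1⟩ ∈ S.erase i := hσmem _
        rw [hk] at hmem1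
        exact absurd hmem1 (Finset.notMem_erase i S)
      · rw [dif_neg h1, dif_pos h2] at hk
        have hmem1 : σ ⟨(k2 : ℕ), h2⟩ ∈ S.erase i := hσmem _
        rw [← hk] at hmem1
        exact absurd hmem1 (Finset.notMem_erase i S)
      · have e1 : (k1 : ℕ) = (S.erase i).card := by
          have := k1.isLt; rw [hm i hi] at h1 ⊢; omega
        have e2 : (k2 : ℕ) = (S.erase i).card := by
          have := k2.isLt; rw [hm i hi] at h2 ⊢; omega
        exact Fin.ext (e1.trans e2.symm)
    · intro k
      simp only [hext]
      split
      · exact Finset.erase_subset i S (hσmem _)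
      · exact hA hi
  have hchle : ∀ i (σ τ : Fin (S.erase i).card → ℕ),
      cheb σ τ ≤ cheb (ext i σ) (ext i τ) := by
    intro i σ τ
    apply Finset.sup_le
    intro j _
    have hj : (j : ℕ) < S.card := lt_of_lt_of_le j.isLt
      (Finset.card_le_card (Finset.erase_subset i S))
    have : Nat.dist (σ j) (τ j)
        = Nat.dist (ext i σ ⟨j, hj⟩) (ext i τ ⟨j, hj⟩) := by
      rw [hpos, hpos]
    rw [this]
    show _ ≤ Finset.univ.sup fun k => Nat.dist (ext i σ k) (ext i τ k)
    exact Finset.le_sup (f := fun k => Nat.dist (ext i σ k) (ext i τ k))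
      (Finset.mem_univ (⟨(j : ℕ), hj⟩ : Fin S.card))
  have hU2 : ∀ f ∈ U, ∀ g ∈ U, f ≠ g → d ≤ cheb f g := by
    intro f hf g hg hfg
    obtain ⟨i, hi, σ, hσ, rfl⟩ := hmemU f hf
    obtain ⟨j, hj, τ, hτ, rfl⟩ := hmemU g hg
    by_cases hij : i = j
    · subst hij
      have hστ : σ ≠ τ := fun h => hfg (by rw [h])
      exact le_trans (hB2 i σ hσ τ hτ hστ) (hchle i σ τ)
    · have : Nat.dist (ext i σ L) (ext j τ L) = Nat.dist i j := by
        rw [hlast i hi, hlast j hj]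
      calc d ≤ Nat.dist i j := hdist i hi j hj hij
        _ = Nat.dist (ext i σ L) (ext j τ L) := this.symm
        _ ≤ cheb (ext i σ) (ext j τ) := by
              show _ ≤ Finset.univ.sup fun k => Nat.dist (ext i σ k) (ext j τ k)
              exact Finset.le_sup (f := fun k => Nat.dist (ext i σ k) (ext j τ k))
                (Finset.mem_univ L)
  have hdisj : ∀ i ∈ A, ∀ j ∈ A, i ≠ j →
      Disjoint ((B i).image (ext i)) ((B j).image (ext j)) := by
    intro i hi j hj hij
    rw [Finset.disjoint_left]
    rintro f hf1 hf2
    simp only [Finset.mem_image] at hf1 hf2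
    obtain ⟨σ, hσ, rfl⟩ := hf1
    obtain ⟨τ, hτ, hτe⟩ := hf2
    have := congrFun hτe L
    rw [hlast j hj, hlast i hi] at this
    exact hij this.symm
  have hcard : U.card = ∑ i ∈ A, Pd d (S.erase i) := by
    rw [hU, Finset.card_biUnion hdisj]
    refine Finset.sum_congr rfl fun i hi => ?_
    rw [Finset.card_image_of_injective _ (hextinj i), hB3]
  have hmem : U.card ∈ {k | ∃ A : Finset (Fin S.card → ℕ),
      (∀ σ ∈ A, Function.Injective σ ∧ ∀ i, σ i ∈ S) ∧
      (∀ σ ∈ A, ∀ τ ∈ A, σ ≠ τ → d ≤ cheb σ τ) ∧ A.card = k} :=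
    ⟨U, hU1, hU2, rfl⟩
  have := le_csSup (pd_bddAbove d S) hmem
  rwa [hcard] at this

/-- Let `n > d ≥ 1` and let `A ⊆ {1,…,n+1}` with any two distinct elements of
`A` differing by at least `d`. Then
`P(n+1, d) ≥ Σ_{i ∈ A} P_d({1,…,n+1} \ {i})`. -/
theorem stmt1 (n d : ℕ) (hd : 1 ≤ d) (hn : d < n)
    (A : Finset ℕ) (hA : A ⊆ Finset.Icc 1 (n + 1))
    (hdist : ∀ i ∈ A, ∀ j ∈ A, i ≠ j → d ≤ Nat.dist i j) :
    ∑ i ∈ A, Pd d ((Finset.Icc 1 (n + 1)).erase i) ≤ P (n + 1) d :=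
  sum_le_Pd d (Finset.Icc 1 (n + 1)) A hA hdist
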